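/- Let A ∈ ℝ^{n×n} be a symmetric positive definite matrix all of whose entries satisfy |A_{ij}| ≤ 1. Then the matrix arcsin(A) obtained by applying the arcsine function entrywise, i.e. (arcsin A)_{ij} = arcsin(A_{ij}), is symmetric positive definite. (This is the key claim of Appendix C of the paper: the real representation R_x^r = (2/π)·arcsin(R̄^r) of the one-bit data covariance matrix is positive definite whenever the real representation R̄^r of the normalized unquantized covariance is positive definite, which in turn guarantees that R_x is positive definite and the worst-case Fisher information matrix is well defined.) -/

import Mathlib

open Matrix

noncomputable def bc (k : ℕ) : ℝ := (Nat.centralBinom k : ℝ) / 4 ^ k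
noncomputable def cc (k : ℕ) : ℝ := bc k / (2 * k + 1)

lemma bc_pos (k : ℕ) : 0 < bc k := by
  unfold bc
  have := Nat.centralBinom_pos k
  positivity

lemma bc_le_one (k : ℕ) : bc k ≤ 1 := by
  unfold bc
  rw [div_le_one (by positivity)]
  have h1 : Nat.centralBinom k ≤ 4 ^ k := by
    calc Nat.centralBinom k = (2 * k).choose k := rfl
    _ ≤ (2 * k + 1).choose k := Nat.choose_le_choose k (by omega)
    _ ≤ 4 ^ k := Nat.choose_middle_le_pow k
  exact_mod_cast h1

lemma cc_pos (k : ℕ) : 0 < cc k := by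
  unfold cc; have := bc_pos k; positivity

lemma cc_mul (k : ℕ) : cc k * (2 * k + 1) = bc k := by
  unfold cc; field_simp

lemma bc_zero : bc 0 = 1 := by simp [bc, Nat.centralBinom]
lemma cc_zero : cc 0 = 1 := by simp [cc, bc_zero]

lemma bc_rec (k : ℕ) : 2 * (k + 1) * bc (k + 1) = (2 * k + 1) * bc k := by
  have h := Nat.succ_mul_centralBinom_succ k
  have h' : ((k : ℝ) + 1) * (Nat.centralBinom (k + 1) : ℝ)
      = 2 * (2 * k + 1) * (Nat.centralBinom k : ℝ) := by exact_mod_cast h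
  unfold bc
  rw [pow_succ]
  field_simp
  nlinarith [h', pow_pos (show (0:ℝ) < 4 by norm_num) k]

lemma summable_kpow {r : ℝ} (h0 : 0 ≤ r) (h1 : r < 1) :
    Summable (fun k : ℕ => 2 * ((k : ℝ) + 1) * r ^ k) := by
  have hn : ‖r‖ < 1 := by rwa [Real.norm_eq_abs, abs_of_nonneg h0]
  have hs : Summable (fun k : ℕ => (k : ℝ) * r ^ k + r ^ k) := by
    have := summable_pow_mul_geometric_of_norm_lt_one 1 hn
    simp only [pow_one] at this
    exact this.add (summable_geometric_of_lt_one h0 h1)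
  exact (hs.mul_left 2).congr fun k => by ring

lemma g_deriv_bound {r x : ℝ} (hr1 : r < 1) (hxr : |x| ≤ r) (k : ℕ) :
    ‖bc k * (((2 * k : ℕ) : ℝ) * x ^ (2 * k - 1))‖ ≤ 2 * ((k : ℝ) + 1) * r ^ k := by
  have h0 : 0 ≤ r := le_trans (abs_nonneg x) hxr
  have hxp : |x| ^ (2 * k - 1) ≤ r ^ k := by
    calc |x| ^ (2 * k - 1) ≤ r ^ (2 * k - 1) := pow_le_pow_left₀ (abs_nonneg x) hxr _
    _ ≤ r ^ k := pow_le_pow_of_le_one h0 (le_of_lt hr1) (by omega)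
  have hb := bc_le_one k
  have hb0 := (bc_pos k).le
  calc ‖bc k * (((2 * k : ℕ) : ℝ) * x ^ (2 * k - 1))‖
      = bc k * ((2 * (k : ℝ)) * |x| ^ (2 * k - 1)) := by
        rw [norm_mul, norm_mul, Real.norm_eq_abs, Real.norm_eq_abs, Real.norm_eq_abs,
          abs_of_nonneg hb0, abs_pow]
        push_cast
        rw [abs_of_nonneg (by positivity : (0:ℝ) ≤ 2 * (k:ℝ))]
    _ ≤ 1 * ((2 * ((k : ℝ) + 1)) * r ^ k) := by
        apply mul_le_mul hb ?_ (by positivity) (by norm_num)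
        apply mul_le_mul (by linarith) hxp (by positivity) (by positivity)
    _ = 2 * ((k : ℝ) + 1) * r ^ k := by ring

lemma summable_g_deriv {x : ℝ} (hx : |x| < 1) :
    Summable (fun k => bc k * (((2 * k : ℕ) : ℝ) * x ^ (2 * k - 1))) :=
  Summable.of_norm_bounded (summable_kpow (abs_nonneg x) hx)
    (fun k => g_deriv_bound hx le_rfl k)

lemma summable_g {x : ℝ} (hx : |x| < 1) : Summable (fun k => bc k * x ^ (2 * k)) := by
  refine Summable.of_norm_bounded (summable_geometric_of_lt_one (abs_nonneg x) hx) fun k => ?_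
  rw [norm_mul, Real.norm_eq_abs, Real.norm_eq_abs, abs_of_nonneg (bc_pos k).le, abs_pow]
  calc bc k * |x| ^ (2 * k) ≤ 1 * |x| ^ k := by
        apply mul_le_mul (bc_le_one k) ?_ (by positivity) one_pos.le
        exact pow_le_pow_of_le_one (abs_nonneg x) hx.le (by omega)
    _ = |x| ^ k := one_mul _

lemma hasDerivAt_g {x : ℝ} (hx : |x| < 1) :
    HasDerivAt (fun y => ∑' k, bc k * y ^ (2 * k))
      (∑' k, bc k * (((2 * k : ℕ) : ℝ) * x ^ (2 * k - 1))) x := by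
  set r : ℝ := (|x| + 1) / 2 with hr
  have hax := abs_nonneg x
  have hr0 : 0 < r := by positivity
  have hr1 : r < 1 := by rw [hr]; linarith
  have hxr : |x| < r := by rw [hr]; linarith
  refine hasDerivAt_tsum_of_isPreconnected (summable_kpow hr0.le hr1) isOpen_Ioo
    (convex_Ioo (-r) r).isPreconnected
    (fun k y _ => (hasDerivAt_pow (2 * k) y).const_mul (bc k))
    (fun k y hy => g_deriv_bound hr1 (abs_le.2 ⟨hy.1.le, hy.2.le⟩) k)
    (show (0:ℝ) ∈ Set.Ioo (-r) r by constructor <;> simp [hr0, hr0.le])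
    ?_ (abs_lt.1 hxr)
  · apply summable_of_ne_finset_zero (s := {0})
    intro k hk
    simp only [Finset.mem_singleton] at hk
    rw [zero_pow (by omega), mul_zero]

lemma ode_g {x : ℝ} (hx : |x| < 1) :
    (1 - x ^ 2) * (∑' k, bc k * (((2 * k : ℕ) : ℝ) * x ^ (2 * k - 1)))
      = x * ∑' k, bc k * x ^ (2 * k) := by
  set D := ∑' k, bc k * (((2 * k : ℕ) : ℝ) * x ^ (2 * k - 1)) with hD
  have hS : HasSum (fun k => bc k * (((2 * k : ℕ) : ℝ) * x ^ (2 * k - 1))) D :=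
    (summable_g_deriv hx).hasSum
  have h1 : HasSum (fun k => bc (k + 1) * (((2 * (k + 1) : ℕ) : ℝ) * x ^ (2 * (k + 1) - 1))) D := by
    have := (hasSum_nat_add_iff' 1).2 hS
    simpa using this
  have h1' : HasSum (fun k : ℕ => (2 * (k : ℝ) + 1) * bc k * x ^ (2 * k + 1)) D := by
    have hfun : (fun k : ℕ => bc (k + 1) * (((2 * (k + 1) : ℕ) : ℝ) * x ^ (2 * (k + 1) - 1)))
        = fun k : ℕ => (2 * (k : ℝ) + 1) * bc k * x ^ (2 * k + 1) := by
      funext k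
      have he : 2 * (k + 1) - 1 = 2 * k + 1 := by omega
      have hb := bc_rec k
      rw [he]
      push_cast
      push_cast at hb
      linear_combination (x ^ (2 * k + 1)) * hb
    rwa [hfun] at h1
  have h2 : HasSum (fun k : ℕ => 2 * (k : ℝ) * bc k * x ^ (2 * k + 1)) (x ^ 2 * D) := by
    have h := hS.mul_left (x ^ 2)
    have hfun : (fun k : ℕ => x ^ 2 * (bc k * (((2 * k : ℕ) : ℝ) * x ^ (2 * k - 1))))
        = fun k : ℕ => 2 * (k : ℝ) * bc k * x ^ (2 * k + 1) := by
      funext k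
      cases k with
      | zero => simp
      | succ m =>
        have he : 2 * (m + 1) - 1 = 2 * m + 1 := by omega
        rw [he, show 2 * (m + 1) + 1 = (2 * m + 1) + 2 from by omega, pow_add]
        push_cast
        ring
    rwa [hfun] at h
  have h3 : HasSum (fun k : ℕ => bc k * x ^ (2 * k + 1)) (x * ∑' k, bc k * x ^ (2 * k)) := by
    have h := (summable_g hx).hasSum.mul_left x
    have hfun : (fun k : ℕ => x * (bc k * x ^ (2 * k)))
        = fun k : ℕ => bc k * x ^ (2 * k + 1) := by
      funext k; rw [pow_succ]; ring
    rwa [hfun] at h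
  have h4 := h2.add h3
  have hfun : (fun k : ℕ => 2 * (k : ℝ) * bc k * x ^ (2 * k + 1) + bc k * x ^ (2 * k + 1))
      = fun k : ℕ => (2 * (k : ℝ) + 1) * bc k * x ^ (2 * k + 1) := by
    funext k; ring
  rw [hfun] at h4
  have := h1'.unique h4
  linarith [this]

lemma const_of_deriv_zero_Ioo {f : ℝ → ℝ}
    (hf : ∀ x ∈ Set.Ioo (-1 : ℝ) 1, HasDerivAt f 0 x) :
    ∀ x ∈ Set.Ioo (-1 : ℝ) 1, f x = f 0 := by
  intro x hx
  rcases le_total 0 x with h | h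
  · have key := constant_of_has_deriv_right_zero (f := f) (a := 0) (b := x)
      (fun y hy => (hf y ⟨by linarith [hy.1], lt_of_le_of_lt hy.2 hx.2⟩).continuousAt.continuousWithinAt)
      (fun y hy => (hf y ⟨by linarith [hy.1], lt_trans hy.2 hx.2⟩).hasDerivWithinAt)
    exact key x (Set.right_mem_Icc.2 h)
  · have key := constant_of_has_deriv_right_zero (f := f) (a := x) (b := 0)
      (fun y hy => (hf y ⟨lt_of_lt_of_le hx.1 hy.1, by linarith [hy.2]⟩).continuousAt.continuousWithinAt)
      (fun y hy => (hf y ⟨lt_of_lt_of_le hx.1 hy.1, by linarith [hy.2]⟩).hasDerivWithinAt)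
    exact (key 0 (Set.right_mem_Icc.2 h)).symm

lemma one_sub_sq_pos {x : ℝ} (hx : |x| < 1) : 0 < 1 - x ^ 2 := by
  have h := abs_lt.1 hx
  nlinarith [h.1, h.2]

lemma hasDerivAt_sqrt_one_sub_sq {x : ℝ} (hx : |x| < 1) :
    HasDerivAt (fun y => Real.sqrt (1 - y ^ 2)) (-x / Real.sqrt (1 - x ^ 2)) x := by
  have hpos := one_sub_sq_pos hx
  have h1 : HasDerivAt (fun y : ℝ => 1 - y ^ 2) (-(2 * x)) x := by
    simpa using ((hasDerivAt_pow 2 x).const_sub 1)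
  have h2 := (Real.hasDerivAt_sqrt hpos.ne').comp x h1
  refine h2.congr_deriv ?_
  have hs : Real.sqrt (1 - x ^ 2) > 0 := Real.sqrt_pos.2 hpos
  field_simp

lemma gg_zero : (∑' k, bc k * (0:ℝ) ^ (2 * k)) = 1 := by
  rw [tsum_eq_single 0 (fun k hk => by rw [zero_pow (by omega), mul_zero])]
  simp [bc_zero]

lemma g_eq {x : ℝ} (hx : |x| < 1) :
    (∑' k, bc k * x ^ (2 * k)) = 1 / Real.sqrt (1 - x ^ 2) := by
  set h : ℝ → ℝ := fun y => (∑' k, bc k * y ^ (2 * k)) * Real.sqrt (1 - y ^ 2) with hh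
  have hder : ∀ y ∈ Set.Ioo (-1 : ℝ) 1, HasDerivAt h 0 y := by
    intro y hy
    have hy' : |y| < 1 := abs_lt.2 ⟨hy.1, hy.2⟩
    have hpos := one_sub_sq_pos hy'
    have hs : (0:ℝ) < Real.sqrt (1 - y ^ 2) := Real.sqrt_pos.2 hpos
    have hsq : Real.sqrt (1 - y ^ 2) ^ 2 = 1 - y ^ 2 := Real.sq_sqrt hpos.le
    have hmul := (hasDerivAt_g hy').mul (hasDerivAt_sqrt_one_sub_sq hy')
    refine hmul.congr_deriv ?_
    have hode := ode_g hy'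
    set D := ∑' k, bc k * (((2 * k : ℕ) : ℝ) * y ^ (2 * k - 1)) with hDdef
    set G := ∑' k, bc k * y ^ (2 * k) with hGdef
    set s := Real.sqrt (1 - y ^ 2) with hsdef
    have key : D * s + G * (-y / s) = (D * (1 - y ^ 2) - y * G) / s := by
      rw [← hsq]; field_simp; ring
    rw [key]
    rw [show D * (1 - y ^ 2) - y * G = 0 by linarith [hode], zero_div]
  have hc := const_of_deriv_zero_Ioo hder x ⟨(abs_lt.1 hx).1, (abs_lt.1 hx).2⟩
  rw [hh] at hc
  simp only at hc
  rw [gg_zero] at hc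
  norm_num at hc
  have hs : (0:ℝ) < Real.sqrt (1 - x ^ 2) := Real.sqrt_pos.2 (one_sub_sq_pos hx)
  rw [eq_div_iff hs.ne']
  exact hc

lemma ph_deriv_bound {r x : ℝ} (hr1 : r < 1) (hxr : |x| ≤ r) (k : ℕ) :
    ‖cc k * (((2 * k + 1 : ℕ) : ℝ) * x ^ (2 * k + 1 - 1))‖ ≤ 2 * ((k : ℝ) + 1) * r ^ k := by
  have h0 : 0 ≤ r := le_trans (abs_nonneg x) hxr
  have he : 2 * k + 1 - 1 = 2 * k := by omega
  rw [he, norm_mul, norm_mul, Real.norm_eq_abs, Real.norm_eq_abs, Real.norm_eq_abs,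
    abs_of_nonneg (cc_pos k).le, abs_pow, abs_of_nonneg (by positivity : (0:ℝ) ≤ ((2*k+1:ℕ):ℝ)),
    ← mul_assoc]
  have h1 : cc k * ((2 * k + 1 : ℕ) : ℝ) = bc k := by
    have := cc_mul k; push_cast; push_cast at this; linarith
  rw [h1]
  calc bc k * |x| ^ (2 * k) ≤ 1 * r ^ k := by
        apply mul_le_mul (bc_le_one k) ?_ (by positivity) one_pos.le
        calc |x| ^ (2 * k) ≤ r ^ (2 * k) := pow_le_pow_left₀ (abs_nonneg x) hxr _
          _ ≤ r ^ k := pow_le_pow_of_le_one h0 hr1.le (by omega)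
    _ ≤ 2 * ((k : ℝ) + 1) * r ^ k := by nlinarith [pow_nonneg h0 k]

lemma hasDerivAt_ph {x : ℝ} (hx : |x| < 1) :
    HasDerivAt (fun y => ∑' k, cc k * y ^ (2 * k + 1))
      (∑' k, bc k * x ^ (2 * k)) x := by
  set r : ℝ := (|x| + 1) / 2 with hr
  have hax := abs_nonneg x
  have hr0 : 0 < r := by positivity
  have hr1 : r < 1 := by rw [hr]; linarith
  have hxr : |x| < r := by rw [hr]; linarith
  have key := hasDerivAt_tsum_of_isPreconnected (summable_kpow hr0.le hr1) isOpen_Ioo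
    (convex_Ioo (-r) r).isPreconnected
    (fun k y (_ : y ∈ Set.Ioo (-r) r) => (hasDerivAt_pow (2 * k + 1) y).const_mul (cc k))
    (fun k y hy => ph_deriv_bound hr1 (abs_le.2 ⟨hy.1.le, hy.2.le⟩) k)
    (show (0:ℝ) ∈ Set.Ioo (-r) r by constructor <;> simp [hr0, hr0.le])
    (by
      apply summable_of_ne_finset_zero (s := (∅ : Finset ℕ))
      intro k _
      rw [zero_pow (by omega), mul_zero])
    (show x ∈ Set.Ioo (-r) r from abs_lt.1 hxr)
  refine key.congr_deriv ?_
  apply tsum_congr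
  intro k
  have he : 2 * k + 1 - 1 = 2 * k := by omega
  rw [he]
  have h1 : cc k * ((2 * k + 1 : ℕ) : ℝ) = bc k := by
    have := cc_mul k; push_cast; push_cast at this; linarith
  rw [← h1]; ring

lemma ph_zero : (∑' k, cc k * (0:ℝ) ^ (2 * k + 1)) = 0 := by
  rw [tsum_eq_single 0 (fun k hk => by rw [zero_pow (by omega), mul_zero])]
  simp

lemma arcsin_eq_Ioo {x : ℝ} (hx : |x| < 1) :
    Real.arcsin x = ∑' k, cc k * x ^ (2 * k + 1) := by
  set F : ℝ → ℝ := fun y => (∑' k, cc k * y ^ (2 * k + 1)) - Real.arcsin y with hF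
  have hder : ∀ y ∈ Set.Ioo (-1 : ℝ) 1, HasDerivAt F 0 y := by
    intro y hy
    have hy' : |y| < 1 := abs_lt.2 ⟨hy.1, hy.2⟩
    have h1 := (hasDerivAt_ph hy').sub (Real.hasDerivAt_arcsin (by linarith [hy.1] : y ≠ -1)
      (by linarith [hy.2] : y ≠ 1))
    rwa [g_eq hy', sub_self] at h1
  have hc := const_of_deriv_zero_Ioo hder x ⟨(abs_lt.1 hx).1, (abs_lt.1 hx).2⟩
  rw [hF] at hc
  simp only at hc
  rw [ph_zero, Real.arcsin_zero] at hc
  linarith [hc]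

lemma summable_cc_pow {x : ℝ} (hx : |x| < 1) : Summable (fun k => cc k * x ^ (2 * k + 1)) := by
  refine Summable.of_norm_bounded ((summable_geometric_of_lt_one (abs_nonneg x) hx).mul_left |x|)
    fun k => ?_
  rw [norm_mul, Real.norm_eq_abs, Real.norm_eq_abs, abs_of_nonneg (cc_pos k).le, abs_pow]
  have hb1 : bc k ≤ 1 := bc_le_one k
  have hcc : cc k ≤ 1 := by
    unfold cc
    calc bc k / (2 * (k:ℝ) + 1) ≤ bc k :=
      div_le_self (bc_pos k).le (by nlinarith [(Nat.cast_nonneg k : (0:ℝ) ≤ k)])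
      _ ≤ 1 := hb1
  calc cc k * |x| ^ (2 * k + 1) ≤ 1 * (|x| * |x| ^ k) := by
        apply mul_le_mul hcc ?_ (by positivity) one_pos.le
        rw [pow_succ']
        apply mul_le_mul le_rfl (pow_le_pow_of_le_one (abs_nonneg x) hx.le (by omega))
          (by positivity) (abs_nonneg x)
    _ = |x| * |x| ^ k := one_mul _

lemma summable_cc : Summable cc := by
  apply summable_of_sum_range_le (fun k => (cc_pos k).le)
  intro N
  -- partial sums bounded by π/2 via limit x → 1⁻
  have hlim : Filter.Tendsto (fun x : ℝ => ∑ k ∈ Finset.range N, cc k * x ^ (2 * k + 1))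
      (nhdsWithin 1 (Set.Iio 1)) (nhds (∑ k ∈ Finset.range N, cc k * (1:ℝ) ^ (2 * k + 1))) := by
    apply Filter.Tendsto.mono_left ?_ nhdsWithin_le_nhds
    exact (Continuous.tendsto (by continuity) 1)
  have hev : ∀ᶠ x in nhdsWithin (1:ℝ) (Set.Iio 1),
      (∑ k ∈ Finset.range N, cc k * x ^ (2 * k + 1)) ≤ Real.pi / 2 := by
    filter_upwards [Ioo_mem_nhdsLT (show (0:ℝ) < 1 by norm_num)] with x hx
    have hx1 : |x| < 1 := abs_lt.2 ⟨by linarith [hx.1], hx.2⟩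
    calc (∑ k ∈ Finset.range N, cc k * x ^ (2 * k + 1))
        ≤ ∑' k, cc k * x ^ (2 * k + 1) := by
          apply Summable.sum_le_tsum (Finset.range N) (fun k _ => mul_nonneg (cc_pos k).le (pow_nonneg (by linarith [hx.1]) _)) (summable_cc_pow hx1)
      _ = Real.arcsin x := (arcsin_eq_Ioo hx1).symm
      _ ≤ Real.pi / 2 := Real.arcsin_le_pi_div_two x
  have := le_of_tendsto hlim hev
  simpa using this

lemma summable_cc_pow' {x : ℝ} (hx : |x| ≤ 1) : Summable (fun k => cc k * x ^ (2 * k + 1)) := by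
  refine Summable.of_norm_bounded summable_cc fun k => ?_
  rw [norm_mul, Real.norm_eq_abs, Real.norm_eq_abs, abs_of_nonneg (cc_pos k).le, abs_pow]
  calc cc k * |x| ^ (2 * k + 1) ≤ cc k * 1 := by
        apply mul_le_mul le_rfl (pow_le_one₀ (abs_nonneg x) hx) (by positivity) (cc_pos k).le
    _ = cc k := mul_one _

noncomputable def clampF (x : ℝ) : ℝ := max (-1) (min x 1)

lemma clampF_continuous : Continuous clampF :=
  continuous_const.max (continuous_id.min continuous_const)

lemma clampF_abs_le (x : ℝ) : |clampF x| ≤ 1 := by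
  rw [abs_le]
  constructor
  · exact le_max_left _ _
  · exact max_le (by norm_num) (min_le_right _ _)

lemma clampF_eq {x : ℝ} (hx : |x| ≤ 1) : clampF x = x := by
  have h := abs_le.1 hx
  unfold clampF
  rw [min_eq_left h.2, max_eq_right h.1]

lemma arcsin_eq_Icc {x : ℝ} (hx : |x| ≤ 1) :
    Real.arcsin x = ∑' k, cc k * x ^ (2 * k + 1) := by
  set F : ℝ → ℝ := fun y => ∑' k, cc k * (clampF y) ^ (2 * k + 1) with hF
  have hFc : Continuous F := by
    apply continuous_tsum ?_ summable_cc
    · intro k y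
      rw [norm_mul, Real.norm_eq_abs, Real.norm_eq_abs, abs_of_nonneg (cc_pos k).le, abs_pow]
      calc cc k * |clampF y| ^ (2 * k + 1) ≤ cc k * 1 := by
            apply mul_le_mul le_rfl (pow_le_one₀ (abs_nonneg _) (clampF_abs_le y))
              (by positivity) (cc_pos k).le
        _ = cc k := mul_one _
    · exact fun k => continuous_const.mul (clampF_continuous.pow _)
  have heq : Set.EqOn F Real.arcsin (Set.Ioo (-1 : ℝ) 1) := by
    intro y hy
    have hy' : |y| < 1 := abs_lt.2 ⟨hy.1, hy.2⟩
    rw [hF]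
    simp only
    rw [clampF_eq hy'.le, ← arcsin_eq_Ioo hy']
  have hclos := heq.closure hFc Real.continuous_arcsin
  rw [closure_Ioo (by norm_num : (-1:ℝ) ≠ 1)] at hclos
  have hx' : x ∈ Set.Icc (-1:ℝ) 1 := abs_le.1 hx
  have := hclos hx'
  rw [hF] at this
  simp only at this
  rw [clampF_eq hx] at this
  exact this.symm

lemma hasSum_arcsin {x : ℝ} (hx : |x| ≤ 1) :
    HasSum (fun k => cc k * x ^ (2 * k + 1)) (Real.arcsin x) := by
  rw [arcsin_eq_Icc hx]
  exact (summable_cc_pow' hx).hasSum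

lemma schur_pow {n : ℕ} {A : Matrix (Fin n) (Fin n) ℝ} (hA : A.PosSemidef) (m : ℕ)
    (x : Fin n → ℝ) : 0 ≤ ∑ i, ∑ j, x i * x j * A i j ^ m := by
  obtain ⟨m', B, hB⟩ := Matrix.posSemidef_iff_eq_sum_vecMulVec.1 hA
  have hAij : ∀ i j, A i j = ∑ l, B l i * B l j := by
    intro i j
    rw [hB]
    simp [Matrix.sum_apply, Matrix.vecMulVec_apply]
  induction m generalizing x with
  | zero =>
    have h1 : ∑ i, ∑ j, x i * x j * A i j ^ 0 = ∑ i, x i * ∑ j, x j := by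
      refine Finset.sum_congr rfl fun i _ => ?_
      rw [Finset.mul_sum]
      exact Finset.sum_congr rfl fun j _ => by ring
    rw [h1, ← Finset.sum_mul]
    exact mul_self_nonneg _
  | succ m ih =>
    have key : ∑ i, ∑ j, x i * x j * A i j ^ (m + 1)
        = ∑ l, ∑ i, ∑ j, (x i * B l i) * (x j * B l j) * A i j ^ m := by
      have step1 : ∑ i, ∑ j, x i * x j * A i j ^ (m + 1)
          = ∑ i, ∑ j, ∑ l, (x i * B l i) * (x j * B l j) * A i j ^ m := by
        refine Finset.sum_congr rfl fun i _ => Finset.sum_congr rfl fun j _ => ?_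
        rw [pow_succ, show A i j ^ m * A i j = A i j * A i j ^ m from mul_comm _ _,
          ← mul_assoc, hAij i j, Finset.mul_sum, Finset.sum_mul]
        exact Finset.sum_congr rfl fun l _ => by ring
      rw [step1]
      rw [show (∑ i, ∑ j, ∑ l, (x i * B l i) * (x j * B l j) * A i j ^ m)
          = ∑ i, ∑ l, ∑ j, (x i * B l i) * (x j * B l j) * A i j ^ m from
        Finset.sum_congr rfl fun i _ => Finset.sum_comm]
      exact Finset.sum_comm
    rw [key]
    exact Finset.sum_nonneg fun l _ => ih (fun i => x i * B l i)

lemma quad_form_eq {n : ℕ} (M : Matrix (Fin n) (Fin n) ℝ) (x : Fin n → ℝ) :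
    dotProduct (star x) (M *ᵥ x) = ∑ i, ∑ j, x i * x j * M i j := by
  simp only [dotProduct, Matrix.mulVec, Pi.star_apply, star_trivial]
  refine Finset.sum_congr rfl fun i _ => ?_
  rw [Finset.mul_sum]
  exact Finset.sum_congr rfl fun j _ => by ring

/-- Key claim of Appendix C: if `A` is a real symmetric positive definite
matrix with all entries of absolute value at most 1, then the entrywise
arcsine `(arcsin A)_{ij} = arcsin(A_{ij})` is symmetric positive definite. -/
theorem entrywise_arcsin_posDef
    (n : ℕ) (A : Matrix (Fin n) (Fin n) ℝ) (hA : A.PosDef)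
    (hbound : ∀ i j, |A i j| ≤ 1) :
    (Matrix.of fun i j => Real.arcsin (A i j)).PosDef := by
  refine Matrix.posDef_iff_dotProduct_mulVec.2 ⟨?_, ?_⟩
  · apply Matrix.IsHermitian.ext
    intro i j
    simp only [Matrix.of_apply, star_trivial]
    rw [← hA.1.apply i j, star_trivial]
  · intro x hx
    have hq := hA.dotProduct_mulVec_pos hx
    rw [quad_form_eq] at hq
    have hsum : ∀ i j, HasSum (fun k => x i * x j * (cc k * A i j ^ (2 * k + 1)))
        (x i * x j * Real.arcsin (A i j)) :=
      fun i j => (hasSum_arcsin (hbound i j)).mul_left (x i * x j)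
    have hbig : HasSum (fun k => ∑ i, ∑ j, x i * x j * (cc k * A i j ^ (2 * k + 1)))
        (∑ i, ∑ j, x i * x j * Real.arcsin (A i j)) :=
      hasSum_sum (fun i _ => hasSum_sum (fun j _ => hsum i j))
    have hterm : ∀ k, (∑ i, ∑ j, x i * x j * (cc k * A i j ^ (2 * k + 1)))
        = cc k * ∑ i, ∑ j, x i * x j * A i j ^ (2 * k + 1) := by
      intro k
      rw [Finset.mul_sum]
      refine Finset.sum_congr rfl fun i _ => ?_
      rw [Finset.mul_sum]
      exact Finset.sum_congr rfl fun j _ => by ring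
    have hnonneg : ∀ k, 0 ≤ ∑ i, ∑ j, x i * x j * (cc k * A i j ^ (2 * k + 1)) := by
      intro k
      rw [hterm k]
      exact mul_nonneg (cc_pos k).le (schur_pow hA.posSemidef _ x)
    have h0 : (∑ i, ∑ j, x i * x j * (cc 0 * A i j ^ (2 * 0 + 1)))
        = ∑ i, ∑ j, x i * x j * A i j := by
      rw [hterm 0, cc_zero, one_mul]
      exact Finset.sum_congr rfl fun i _ => Finset.sum_congr rfl fun j _ => by norm_num
    have hle := le_hasSum hbig 0 (fun k _ => hnonneg k)
    rw [h0] at hle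
    have hfinal : 0 < ∑ i, ∑ j, x i * x j * Real.arcsin (A i j) := lt_of_lt_of_le hq hle
    rw [quad_form_eq]
    simpa only [Matrix.of_apply] using hfinal
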